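/- Let F be a forest on n vertices with p | e(F), and suppose the edges of a complete graph K on at least n + α + 1 vertices are colored by ℤ/pℤ such that some color l satisfies: every vertex is incident to at most α edges not colored l. Then K contains a zero-sum copy of F, i.e., a copy of F whose edge colors sum to 0 in ℤ/pℤ. -/
import Mathlib
open Finset SimpleGraph

section
universe u v

lemma exists_deg_le_one {A : Type*} [Fintype A] [DecidableEq A] [Nonempty A]
    (F : SimpleGraph A) [DecidableRel F.Adj] (hF : F.IsAcyclic) :
    ∃ a : A, F.degree a ≤ 1 := by
  classical
  set P : ℕ → Prop := fun k => ∃ (u v : A) (p : F.Walk u v), p.IsPath ∧ p.length = k with hP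
  have hP0 : P 0 := ⟨Classical.arbitrary A, Classical.arbitrary A, .nil, Walk.IsPath.nil, rfl⟩
  set N := Nat.findGreatest P (Fintype.card A) with hN
  have hPN : P N := Nat.findGreatest_spec (Nat.zero_le _) hP0
  have hmax : ∀ k, P k → k ≤ N := by
    rintro k ⟨u, v, p, hp, rfl⟩
    exact Nat.le_findGreatest hp.length_lt.le ⟨u, v, p, hp, rfl⟩
  obtain ⟨u, v, p, hp, hlen⟩ := hPN
  -- every neighbor of v yields an edge of p containing v
  have key : ∀ w, F.Adj v w → s(v, w) ∈ p.edges := by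
    intro w hw
    by_cases hws : w ∈ p.support
    · have hr : (p.dropUntil w hws).IsPath := hp.dropUntil hws
      have hnc := hF (Walk.cons hw (p.dropUntil w hws))
      rw [Walk.cons_isCycle_iff] at hnc
      have : s(v, w) ∈ (p.dropUntil w hws).edges := by
        by_contra hne
        exact hnc ⟨hr, hne⟩
      exact Walk.edges_dropUntil_subset p hws this
    · exfalso
      have hc : (Walk.cons hw.symm p.reverse).IsPath := by
        rw [Walk.cons_isPath_iff]
        refine ⟨hp.reverse, ?_⟩
        rw [Walk.support_reverse, List.mem_reverse]
        exact hws
      have := hmax (N + 1) ⟨w, u, _, hc, by simp [hlen]⟩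
      omega
  by_cases hex : ∃ w, F.Adj v w
  · obtain ⟨w0, hw0⟩ := hex
    -- p.reverse starts at v; analyze its first edge
    have hq : p.reverse.IsPath := hp.reverse
    have hnn : ¬ p.reverse.Nil := by
      rw [Walk.nil_iff_length_eq]
      intro h0
      have hm : s(v, w0) ∈ p.reverse.edges := by
        rw [Walk.edges_reverse, List.mem_reverse]; exact key w0 hw0
      have := Walk.length_edges p.reverse
      rw [h0] at this
      rw [List.length_eq_zero_iff.mp this] at hm
      simp at hm
    obtain ⟨x, h', q', hq'⟩ := Walk.not_nil_iff.mp hnn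
    have hq : p.reverse.IsPath := hp.reverse
    rw [hq', Walk.cons_isPath_iff] at hq
    have huniq : ∀ w, F.Adj v w → w = x := by
      intro w hw
      have hm : s(v, w) ∈ p.reverse.edges := by
        rw [Walk.edges_reverse, List.mem_reverse]; exact key w hw
      rw [hq', Walk.edges_cons] at hm
      rcases List.mem_cons.mp hm with h | h
      · exact (Sym2.congr_right.mp h)
      · exact absurd (Walk.fst_mem_support_of_mem_edges q' h) hq.2
    refine ⟨v, ?_⟩
    rw [← card_singleton x]
    apply card_le_card
    intro w hwm
    rw [mem_neighborFinset] at hwm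
    simp [huniq w hwm]
  · refine ⟨v, ?_⟩
    have : F.neighborFinset v = ∅ := by
      ext w; simp only [mem_neighborFinset, notMem_empty, iff_false]
      exact fun h => hex ⟨w, h⟩
    simp [degree, this]

lemma embed_mono {p : ℕ} {V : Type v} [Fintype V] [DecidableEq V] (χ : V → V → ZMod p)
    (hsym : ∀ x y, χ x y = χ y x) (l : ZMod p) (α : ℕ)
    (hdom : ∀ w : V, (univ.filter fun u => u ≠ w ∧ χ w u ≠ l).card ≤ α) :
    ∀ (n : ℕ) (A : Type u) [Fintype A] [DecidableEq A] (F : SimpleGraph A)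
      [DecidableRel F.Adj],
      F.IsAcyclic → Fintype.card A = n → n + α + 1 ≤ Fintype.card V →
      ∃ f : A → V, Function.Injective f ∧ ∀ x y, F.Adj x y → χ (f x) (f y) = l := by
  intro n
  induction n with
  | zero =>
      intro A _ _ F _ _ hA _
      haveI : IsEmpty A := Fintype.card_eq_zero_iff.mp hA
      exact ⟨fun x => isEmptyElim x, fun {x} => isEmptyElim x, fun x => isEmptyElim x⟩
  | succ n ih =>
      intro A _ _ F _ hforest hA hV
      haveI : Nonempty A := Fintype.card_pos_iff.mp (by omega)
      haveI : Nonempty V := Fintype.card_pos_iff.mp (by omega)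
      obtain ⟨a, hdeg⟩ := exists_deg_le_one F hforest
      set B := {x : A // x ≠ a} with hB
      set F' : SimpleGraph B := F.comap (Subtype.val) with hF'
      haveI : DecidableRel F'.Adj := fun x y => ‹DecidableRel F.Adj› _ _
      let hom : F' →g F := ⟨Subtype.val, fun h => h⟩
      have hforest' : F'.IsAcyclic := by
        intro w c hc
        exact hforest (c.map hom)
          ((Walk.map_isCycle_iff_of_injective (fun _ _ h => Subtype.ext (by exact h))).mpr hc)
      have hcardB : Fintype.card B = n := by
        have : Fintype.card B = Fintype.card A - 1 := by
          simp [hB, Fintype.card_subtype_compl, Fintype.card_subtype_eq]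
        omega
      obtain ⟨g, hginj, hgmono⟩ := ih B F' hforest' hcardB (by omega)
      -- choose the image of `a`
      have hEx : Decidable (∃ b : B, F.Adj a b.val) := Classical.dec _
      set u : V := if h : ∃ b : B, F.Adj a b.val then g h.choose else Classical.arbitrary V
        with hu
      set T : Finset V := (univ.image g) ∪ (univ.filter fun w => w ≠ u ∧ χ u w ≠ l) with hT
      have hTcard : T.card ≤ n + α := by
        calc T.card ≤ (univ.image g).card + _ := card_union_le _ _
        _ ≤ n + α := by
            gcongr
            · rw [card_image_of_injective _ hginj, card_univ, hcardB]
            · exact hdom u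
      have hS : (univ \ T).Nonempty := by
        rw [← card_pos, card_sdiff_of_subset (subset_univ T), card_univ]
        omega
      obtain ⟨v0, hv0⟩ := hS
      rw [mem_sdiff, hT, mem_union, not_or, mem_filter] at hv0
      have hv0img : ∀ b : B, g b ≠ v0 := by
        intro b hb
        exact hv0.2.1 (mem_image.mpr ⟨b, mem_univ b, hb⟩)
      -- the extension
      set f : A → V := fun x => if hx : x = a then v0 else g ⟨x, hx⟩ with hf
      have hfa : f a = v0 := by simp [hf]
      have hfne : ∀ (x : A) (hx : x ≠ a), f x = g ⟨x, hx⟩ := by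
        intro x hx; simp [hf, hx]
      have hedge : ∀ (y : A) (hy : y ≠ a), F.Adj a y → χ v0 (g ⟨y, hy⟩) = l := by
        intro y hy hadj
        have hEx' : ∃ b : B, F.Adj a b.val := ⟨⟨y, hy⟩, hadj⟩
        have hueq : u = g hEx'.choose := by simp [hu, dif_pos hEx']
        have hyb : (⟨y, hy⟩ : B) = hEx'.choose := by
          have h1 : y ∈ F.neighborFinset a := (F.mem_neighborFinset a y).mpr hadj
          have h2 : (hEx'.choose : A) ∈ F.neighborFinset a :=
            (F.mem_neighborFinset a _).mpr hEx'.choose_spec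
          exact Subtype.ext (card_le_one.mp hdeg _ h1 _ h2)
        have hvu : v0 ≠ u := by
          intro h
          exact hv0img hEx'.choose (by rw [← hueq, ← h])
        have hcol : χ u v0 = l := by
          by_contra hc
          exact hv0.2.2 ⟨mem_univ v0, hvu, hc⟩
        rw [hyb, ← hueq, hsym]
        exact hcol
      refine ⟨f, ?_, ?_⟩
      · intro x y hxy
        by_cases hx : x = a <;> by_cases hy : y = a
        · rw [hx, hy]
        · rw [hx, hfa, hfne y hy] at hxy
          exact absurd hxy.symm (hv0img _)
        · rw [hy, hfa, hfne x hx] at hxy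
          exact absurd hxy (hv0img _)
        · rw [hfne x hx, hfne y hy] at hxy
          exact congrArg Subtype.val (hginj hxy)
      · intro x y hadj
        by_cases hx : x = a <;> by_cases hy : y = a
        · exact absurd (hx ▸ hy ▸ hadj) (F.irrefl)
        · rw [hx, hfa, hfne y hy]
          exact hedge y hy (hx ▸ hadj)
        · rw [hy, hfa, hfne x hx, hsym]
          exact hedge x hx (hy ▸ hadj.symm)
        · rw [hfne x hx, hfne y hy]
          exact hgmono ⟨x, hx⟩ ⟨y, hy⟩ hadj
end


/-- A near-monochromatic coloring of a large complete graph contains a zero-sum copy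
of any forest `F` with `p ∣ e(F)`. -/
theorem zero_sum_forest_from_dominant (p : ℕ) (hp : p.Prime) (n α : ℕ)
    (A : Type*) [Fintype A] [DecidableEq A] (F : SimpleGraph A) [DecidableRel F.Adj]
    (hforest : F.IsAcyclic) (hA : Fintype.card A = n)
    (hdiv : p ∣ F.edgeFinset.card)
    (V : Type*) [Fintype V] [DecidableEq V] (hV : n + α + 1 ≤ Fintype.card V)
    (χ : V → V → ZMod p) (hsym : ∀ x y, χ x y = χ y x) (l : ZMod p)
    (hdom : ∀ v : V, (univ.filter fun u => u ≠ v ∧ χ v u ≠ l).card ≤ α) :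
    ∃ f : A ↪ V,
      ∑ e ∈ F.edgeFinset,
        Sym2.lift ⟨fun x y => χ (f x) (f y), fun x y => hsym (f x) (f y)⟩ e = 0 := by
  obtain ⟨f, hinj, hmono⟩ := embed_mono χ hsym l α hdom n A F hforest hA hV
  refine ⟨⟨f, hinj⟩, ?_⟩
  have hterm : ∀ e ∈ F.edgeFinset,
      Sym2.lift ⟨fun x y => χ (f x) (f y), fun x y => hsym (f x) (f y)⟩ e = l := by
    intro e he
    induction e using Sym2.ind with
    | _ x y =>
      have hadj : F.Adj x y := by rwa [mem_edgeFinset, mem_edgeSet] at he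
      simpa using hmono x y hadj
  calc ∑ e ∈ F.edgeFinset,
        Sym2.lift ⟨fun x y => χ (f x) (f y), fun x y => hsym (f x) (f y)⟩ e
      = ∑ _e ∈ F.edgeFinset, l := Finset.sum_congr rfl hterm
    _ = F.edgeFinset.card • l := Finset.sum_const l
    _ = 0 := by
        obtain ⟨k, hk⟩ := hdiv
        rw [hk, nsmul_eq_mul]
        push_cast
        simp
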